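/- Let p and q be continuous strictly positive probability density functions on [0,1]^2 with S(p,q) and S(p,p) finite. If S(p,q) = S(p,p), then for all x¹,y¹,x²,y² ∈ [0,1], q(x¹,y¹)q(x²,y²) / (q(x¹,y¹)q(x²,y²) + q(x¹,y²)q(x²,y¹)) = p(x¹,y¹)p(x²,y²) / (p(x¹,y¹)p(x²,y²) + p(x¹,y²)p(x²,y¹)); equivalently, the cross-ratios satisfy q(x¹,y¹)q(x²,y²)/(q(x¹,y²)q(x²,y¹)) = p(x¹,y¹)p(x²,y²)/(p(x¹,y²)p(x²,y¹)). -/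

import Mathlib

open Set MeasureTheory

/-- The conditional Kullback–Leibler (CKL) score. -/
noncomputable def condKLScore (q : ℝ → ℝ → ℝ) (x1 y1 x2 y2 : ℝ) : ℝ :=
  -Real.log (q x1 y1 * q x2 y2 / (q x1 y1 * q x2 y2 + q x1 y2 * q x2 y1))

/-- The unit box `[0,1]⁴` in `ℝ × ℝ × ℝ × ℝ`, for `(x¹, y¹, x², y²)`. -/
def unitBox4 : Set (ℝ × ℝ × ℝ × ℝ) :=
  Icc (0:ℝ) 1 ×ˢ (Icc (0:ℝ) 1 ×ˢ (Icc (0:ℝ) 1 ×ˢ Icc (0:ℝ) 1))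

/-- The integrand of the expected conditional KL score
`S(x¹,y¹,x²,y²,q) · p(x¹,y¹) p(x²,y²)`. -/
noncomputable def cklIntegrand (p q : ℝ → ℝ → ℝ) (w : ℝ × ℝ × ℝ × ℝ) : ℝ :=
  condKLScore q w.1 w.2.1 w.2.2.1 w.2.2.2 * (p w.1 w.2.1 * p w.2.2.1 w.2.2.2)

/-- The expected conditional KL score `S(p,q)`. -/
noncomputable def expCondKLScore (p q : ℝ → ℝ → ℝ) : ℝ :=
  ∫ w in unitBox4, cklIntegrand p q w

noncomputable def swapYE : (ℝ × ℝ × ℝ × ℝ) ≃ᵐ (ℝ × ℝ × ℝ × ℝ) :=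
  (MeasurableEquiv.refl ℝ).prodCongr <|
    (MeasurableEquiv.prodAssoc.symm.trans (((MeasurableEquiv.prodComm : (ℝ×ℝ)×ℝ ≃ᵐ ℝ×(ℝ×ℝ))).trans
      ((MeasurableEquiv.refl ℝ).prodCongr (MeasurableEquiv.prodComm : ℝ×ℝ ≃ᵐ ℝ×ℝ))))

lemma swapYE_apply (w : ℝ × ℝ × ℝ × ℝ) : swapYE w = (w.1, w.2.2.2, w.2.2.1, w.2.1) := rfl

lemma mp_swapY : MeasurePreserving (swapYE) (volume : Measure (ℝ×ℝ×ℝ×ℝ)) volume := by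
  have ha : MeasurePreserving (MeasurableEquiv.prodAssoc.symm : ℝ×ℝ×ℝ ≃ᵐ (ℝ×ℝ)×ℝ) volume volume :=
    volume_preserving_prodAssoc.symm MeasurableEquiv.prodAssoc
  have hb : MeasurePreserving (Prod.swap : (ℝ×ℝ)×ℝ → ℝ×(ℝ×ℝ)) volume volume :=
    Measure.measurePreserving_swap
  have hc : MeasurePreserving (Prod.map (id : ℝ→ℝ) (Prod.swap : ℝ×ℝ→ℝ×ℝ)) volume volume :=
    (MeasurePreserving.id volume).prod Measure.measurePreserving_swap
  have hτ : MeasurePreserving (fun z : ℝ×ℝ×ℝ => (z.2.2, z.2.1, z.1)) volume volume := by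
    have h := hc.comp (hb.comp ha)
    have he : (fun z : ℝ×ℝ×ℝ => (z.2.2, z.2.1, z.1))
        = (Prod.map (id : ℝ→ℝ) (Prod.swap : ℝ×ℝ→ℝ×ℝ)) ∘
          ((Prod.swap : (ℝ×ℝ)×ℝ → ℝ×(ℝ×ℝ)) ∘ (MeasurableEquiv.prodAssoc.symm : ℝ×ℝ×ℝ ≃ᵐ (ℝ×ℝ)×ℝ)) := by
      funext z; rfl
    rw [he]; exact h
  have h2 := (MeasurePreserving.id (volume : Measure ℝ)).prod hτ
  have he : ⇑swapYE = Prod.map (id : ℝ→ℝ) (fun z : ℝ×ℝ×ℝ => (z.2.2, z.2.1, z.1)) := by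
    funext w; rfl
  rw [he]; exact h2

lemma swapY_mem_box {w : ℝ × ℝ × ℝ × ℝ} : swapYE w ∈ unitBox4 ↔ w ∈ unitBox4 := by
  rw [swapYE_apply]
  constructor
  · rintro ⟨h1, h2, h3, h4⟩; exact ⟨h1, h4, h3, h2⟩
  · rintro ⟨h1, h2, h3, h4⟩; exact ⟨h1, h4, h3, h2⟩

lemma swapY_preimage_box : ⇑swapYE ⁻¹' unitBox4 = unitBox4 :=
  Set.ext fun _ => swapY_mem_box

/- Gibbs inequality material -/
noncomputable def Gexpr (A A' B B' : ℝ) : ℝ :=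
  -Real.log (B / (B + B')) * A + -Real.log (B' / (B' + B)) * A'
    - -Real.log (A / (A + A')) * A - -Real.log (A' / (A' + A)) * A'

lemma log_ge_one_sub_inv {x : ℝ} (hx : 0 < x) : 1 - x⁻¹ ≤ Real.log x := by
  have h := Real.log_le_sub_one_of_pos (inv_pos.2 hx)
  rw [Real.log_inv] at h; linarith

lemma log_gt_one_sub_inv {x : ℝ} (hx : 0 < x) (hne : x ≠ 1) : 1 - x⁻¹ < Real.log x := by
  have hxinv : x⁻¹ ≠ 1 := fun h => hne (by rw [← inv_inv x, h, inv_one])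
  have h := Real.log_lt_sub_one_of_pos (inv_pos.2 hx) hxinv
  rw [Real.log_inv] at h; linarith

lemma Gexpr_decomp (A A' B B' : ℝ) (hA : 0 < A) (hA' : 0 < A') (hB : 0 < B) (hB' : 0 < B') :
    Gexpr A A' B B' = A * Real.log (A * (B + B') / ((A + A') * B))
      + A' * Real.log (A' * (B + B') / ((A + A') * B')) := by
  have hAA : 0 < A + A' := by linarith
  have hBB : 0 < B + B' := by linarith
  have hBB' : 0 < B' + B := by linarith
  have hAA' : 0 < A' + A := by linarith
  rw [Gexpr, Real.log_div hB.ne' hBB.ne', Real.log_div hB'.ne' hBB'.ne',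
    Real.log_div hA.ne' hAA.ne', Real.log_div hA'.ne' hAA'.ne',
    Real.log_div (by positivity) (by positivity), Real.log_div (by positivity) (by positivity),
    Real.log_mul hA.ne' hBB.ne', Real.log_mul hAA.ne' hB.ne',
    Real.log_mul hA'.ne' hBB.ne', Real.log_mul hAA.ne' hB'.ne']
  rw [add_comm B' B, add_comm A' A]
  ring

lemma term_lb {A s B t : ℝ} (hA : 0 < A) (hs : 0 < s) (hB : 0 < B) (ht : 0 < t) :
    A - s * B / t ≤ A * Real.log (A * t / (s * B)) := by
  have hx : 0 < A * t / (s * B) := by positivity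
  have h := log_ge_one_sub_inv hx
  have hinv : (A * t / (s * B))⁻¹ = s * B / (A * t) := by rw [inv_div]
  have h2 : A * (1 - s * B / (A * t)) ≤ A * Real.log (A * t / (s * B)) := by
    rw [← hinv]; exact mul_le_mul_of_nonneg_left h hA.le
  have h3 : A * (1 - s * B / (A * t)) = A - s * B / t := by field_simp
  linarith [h2, h3.symm.le]

lemma term_lb_strict {A s B t : ℝ} (hA : 0 < A) (hs : 0 < s) (hB : 0 < B) (ht : 0 < t)
    (hne : A * t ≠ s * B) :
    A - s * B / t < A * Real.log (A * t / (s * B)) := by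
  have hx : 0 < A * t / (s * B) := by positivity
  have hx1 : A * t / (s * B) ≠ 1 := by
    intro h; apply hne; field_simp at h; linarith
  have h := log_gt_one_sub_inv hx hx1
  have hinv : (A * t / (s * B))⁻¹ = s * B / (A * t) := by rw [inv_div]
  have h2 : A * (1 - s * B / (A * t)) < A * Real.log (A * t / (s * B)) := by
    rw [← hinv]; exact mul_lt_mul_of_pos_left h hA
  have h3 : A * (1 - s * B / (A * t)) = A - s * B / t := by field_simp
  linarith [h2, h3.symm.le]

lemma Gexpr_nonneg (A A' B B' : ℝ) (hA : 0 < A) (hA' : 0 < A') (hB : 0 < B) (hB' : 0 < B') :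
    0 ≤ Gexpr A A' B B' := by
  have hAA : 0 < A + A' := by linarith
  have hBB : 0 < B + B' := by linarith
  rw [Gexpr_decomp A A' B B' hA hA' hB hB']
  have h1 := term_lb hA hAA hB hBB
  have h2 := term_lb hA' hAA hB' hBB
  have : A - (A + A') * B / (B + B') + (A' - (A + A') * B' / (B + B')) = 0 := by
    field_simp; ring
  linarith

lemma Gexpr_eq_zero (A A' B B' : ℝ) (hA : 0 < A) (hA' : 0 < A') (hB : 0 < B) (hB' : 0 < B')
    (h0 : Gexpr A A' B B' = 0) :
    B / (B + B') = A / (A + A') := by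
  have hAA : 0 < A + A' := by linarith
  have hBB : 0 < B + B' := by linarith
  by_contra hne
  have hcross : A * (B + B') ≠ (A + A') * B := by
    intro h; apply hne
    rw [div_eq_div_iff hBB.ne' hAA.ne']; linarith
  have h1 := term_lb_strict hA hAA hB hBB hcross
  have h2 := term_lb hA' hAA hB' hBB
  have hsum : A - (A + A') * B / (B + B') + (A' - (A + A') * B' / (B + B')) = 0 := by
    field_simp; ring
  rw [Gexpr_decomp A A' B B' hA hA' hB hB'] at h0
  linarith

/- box measure facts -/
lemma unitBox4_measurable : MeasurableSet unitBox4 :=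
  (measurableSet_Icc).prod ((measurableSet_Icc).prod ((measurableSet_Icc).prod measurableSet_Icc))

lemma unitBox4_compact : IsCompact unitBox4 :=
  (isCompact_Icc).prod ((isCompact_Icc).prod ((isCompact_Icc).prod isCompact_Icc))

lemma Ioo_aux {x ε : ℝ} (hx : x ∈ Icc (0:ℝ) 1) (hε : 0 < ε) :
    max (x - ε) 0 < min (x + ε) 1 := by
  obtain ⟨h0, h1⟩ := hx
  simp only [max_lt_iff, lt_min_iff]
  constructor <;> constructor <;> linarith

lemma Ioo_sub_ball {x ε : ℝ} (hx : x ∈ Icc (0:ℝ) 1) (hε : 0 < ε) :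
    Ioo (max (x - ε) 0) (min (x + ε) 1) ⊆ Metric.ball x ε ∩ Icc 0 1 := by
  intro y hy
  obtain ⟨hy1, hy2⟩ := hy
  refine ⟨?_, ?_, ?_⟩
  · rw [Real.ball_eq_Ioo]
    exact ⟨lt_of_le_of_lt (le_max_left _ _) hy1, lt_of_lt_of_le hy2 (min_le_left _ _)⟩
  · exact le_of_lt (lt_of_le_of_lt (le_max_right _ _) hy1)
  · exact le_of_lt (lt_of_lt_of_le hy2 (min_le_right _ _))

lemma ball_inter_box_pos {w : ℝ × ℝ × ℝ × ℝ} (hw : w ∈ unitBox4) {ε : ℝ} (hε : 0 < ε) :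
    0 < volume (Metric.ball w ε ∩ unitBox4) := by
  obtain ⟨h1, h2, h3, h4⟩ := hw
  set J : ℝ → Set ℝ := fun x => Ioo (max (x - ε) 0) (min (x + ε) 1) with hJ
  have hT : J w.1 ×ˢ (J w.2.1 ×ˢ (J w.2.2.1 ×ˢ J w.2.2.2)) ⊆ Metric.ball w ε ∩ unitBox4 := by
    have hball : Metric.ball w ε
        = Metric.ball w.1 ε ×ˢ (Metric.ball w.2.1 ε ×ˢ (Metric.ball w.2.2.1 ε ×ˢ Metric.ball w.2.2.2 ε)) := by
      rw [ball_prod_same, ball_prod_same, ball_prod_same]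
    rintro ⟨a, b, c, d⟩ ⟨ha, hb, hc, hd⟩
    have g1 := Ioo_sub_ball h1 hε ha
    have g2 := Ioo_sub_ball h2 hε hb
    have g3 := Ioo_sub_ball h3 hε hc
    have g4 := Ioo_sub_ball h4 hε hd
    refine ⟨?_, ?_⟩
    · rw [hball]; exact ⟨g1.1, g2.1, g3.1, g4.1⟩
    · exact ⟨g1.2, g2.2, g3.2, g4.2⟩
  refine lt_of_lt_of_le ?_ (measure_mono hT)
  have hopen : IsOpen (J w.1 ×ˢ (J w.2.1 ×ˢ (J w.2.2.1 ×ˢ J w.2.2.2))) :=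
    (isOpen_Ioo).prod ((isOpen_Ioo).prod ((isOpen_Ioo).prod isOpen_Ioo))
  have hne : (J w.1 ×ˢ (J w.2.1 ×ˢ (J w.2.2.1 ×ˢ J w.2.2.2))).Nonempty := by
    refine Set.Nonempty.prod ?_ (Set.Nonempty.prod ?_ (Set.Nonempty.prod ?_ ?_)) <;>
      exact nonempty_Ioo.2 (Ioo_aux ‹_› hε)
  exact hopen.measure_pos volume hne

lemma zero_of_nonneg_cont (g : ℝ × ℝ × ℝ × ℝ → ℝ) (hc : ContinuousOn g unitBox4)
    (hnn : ∀ w ∈ unitBox4, 0 ≤ g w) (hint : IntegrableOn g unitBox4)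
    (hzero : ∫ w in unitBox4, g w = 0) : ∀ w ∈ unitBox4, g w = 0 := by
  intro w0 hw0
  by_contra hne
  have hpos : 0 < g w0 := lt_of_le_of_ne (hnn _ hw0) (Ne.symm hne)
  have hmem : g ⁻¹' Ioi (g w0 / 2) ∈ nhdsWithin w0 unitBox4 :=
    hc w0 hw0 (Ioi_mem_nhds (by linarith))
  rw [Metric.mem_nhdsWithin_iff] at hmem
  obtain ⟨ε, hε, hsub⟩ := hmem
  set s := Metric.ball w0 ε ∩ unitBox4 with hs
  have hsm : MeasurableSet s := Metric.isOpen_ball.measurableSet.inter unitBox4_measurable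
  have hμs_pos : 0 < volume s := ball_inter_box_pos hw0 hε
  have hμs_fin : volume s ≠ ⊤ :=
    (lt_of_le_of_lt (measure_mono inter_subset_right) unitBox4_compact.measure_lt_top).ne
  have hints : IntegrableOn g s := hint.mono_set inter_subset_right
  have hlb : g w0 / 2 * (volume s).toReal ≤ ∫ w in s, g w :=
    setIntegral_ge_of_const_le_real hsm hμs_fin (fun x hx => (hsub hx).le) hints
  have hub : ∫ w in s, g w ≤ ∫ w in unitBox4, g w := by
    refine setIntegral_mono_set hint ?_ (HasSubset.Subset.eventuallyLE inter_subset_right)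
    exact (ae_restrict_iff' unitBox4_measurable).2 (ae_of_all _ hnn)
  have : 0 < g w0 / 2 * (volume s).toReal := by
    apply mul_pos (by linarith)
    exact ENNReal.toReal_pos hμs_pos.ne' hμs_fin
  linarith [hzero ▸ hub]

lemma cklIntegrand_continuousOn (p q : ℝ → ℝ → ℝ)
    (hpc : ContinuousOn (fun z : ℝ × ℝ => p z.1 z.2) (Icc (0:ℝ) 1 ×ˢ Icc (0:ℝ) 1))
    (hqc : ContinuousOn (fun z : ℝ × ℝ => q z.1 z.2) (Icc (0:ℝ) 1 ×ˢ Icc (0:ℝ) 1))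
    (hqpos : ∀ x ∈ Icc (0:ℝ) 1, ∀ y ∈ Icc (0:ℝ) 1, 0 < q x y) :
    ContinuousOn (cklIntegrand p q) unitBox4 := by
  have hmap1 : MapsTo (fun w : ℝ×ℝ×ℝ×ℝ => (w.1, w.2.1)) unitBox4 (Icc (0:ℝ) 1 ×ˢ Icc (0:ℝ) 1) :=
    fun w hw => ⟨hw.1, hw.2.1⟩
  have hmap2 : MapsTo (fun w : ℝ×ℝ×ℝ×ℝ => (w.2.2.1, w.2.2.2)) unitBox4 (Icc (0:ℝ) 1 ×ˢ Icc (0:ℝ) 1) :=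
    fun w hw => ⟨hw.2.2.1, hw.2.2.2⟩
  have hmap3 : MapsTo (fun w : ℝ×ℝ×ℝ×ℝ => (w.1, w.2.2.2)) unitBox4 (Icc (0:ℝ) 1 ×ˢ Icc (0:ℝ) 1) :=
    fun w hw => ⟨hw.1, hw.2.2.2⟩
  have hmap4 : MapsTo (fun w : ℝ×ℝ×ℝ×ℝ => (w.2.2.1, w.2.1)) unitBox4 (Icc (0:ℝ) 1 ×ˢ Icc (0:ℝ) 1) :=
    fun w hw => ⟨hw.2.2.1, hw.2.1⟩
  have c1 : ContinuousOn (fun w : ℝ×ℝ×ℝ×ℝ => q w.1 w.2.1) unitBox4 :=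
    hqc.comp (Continuous.continuousOn (by fun_prop)) hmap1
  have c2 : ContinuousOn (fun w : ℝ×ℝ×ℝ×ℝ => q w.2.2.1 w.2.2.2) unitBox4 :=
    hqc.comp (Continuous.continuousOn (by fun_prop)) hmap2
  have c3 : ContinuousOn (fun w : ℝ×ℝ×ℝ×ℝ => q w.1 w.2.2.2) unitBox4 :=
    hqc.comp (Continuous.continuousOn (by fun_prop)) hmap3
  have c4 : ContinuousOn (fun w : ℝ×ℝ×ℝ×ℝ => q w.2.2.1 w.2.1) unitBox4 :=
    hqc.comp (Continuous.continuousOn (by fun_prop)) hmap4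
  have p1 : ContinuousOn (fun w : ℝ×ℝ×ℝ×ℝ => p w.1 w.2.1) unitBox4 :=
    hpc.comp (Continuous.continuousOn (by fun_prop)) hmap1
  have p2 : ContinuousOn (fun w : ℝ×ℝ×ℝ×ℝ => p w.2.2.1 w.2.2.2) unitBox4 :=
    hpc.comp (Continuous.continuousOn (by fun_prop)) hmap2
  have hqq : ∀ w ∈ unitBox4, 0 < q w.1 w.2.1 * q w.2.2.1 w.2.2.2 := fun w hw =>
    mul_pos (hqpos _ hw.1 _ hw.2.1) (hqpos _ hw.2.2.1 _ hw.2.2.2)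
  have hqq' : ∀ w ∈ unitBox4, 0 < q w.1 w.2.2.2 * q w.2.2.1 w.2.1 := fun w hw =>
    mul_pos (hqpos _ hw.1 _ hw.2.2.2) (hqpos _ hw.2.2.1 _ hw.2.1)
  have hratio : ContinuousOn (fun w : ℝ×ℝ×ℝ×ℝ =>
      q w.1 w.2.1 * q w.2.2.1 w.2.2.2 /
        (q w.1 w.2.1 * q w.2.2.1 w.2.2.2 + q w.1 w.2.2.2 * q w.2.2.1 w.2.1)) unitBox4 :=
    (c1.mul c2).div ((c1.mul c2).add (c3.mul c4))
      (fun w hw => by have := hqq w hw; have := hqq' w hw; positivity)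
  exact ((hratio.log (fun w hw => by
      have := hqq w hw; have := hqq' w hw; positivity)).neg).mul (p1.mul p2)

/-- Equality condition for the conditional KL score: if `p`, `q` are continuous
strictly positive probability densities on `[0,1]²` with finite expected scores
and `S(p,q) = S(p,p)`, then the conditional probabilities (equivalently, the
cross-ratios) of `p` and `q` coincide everywhere on `[0,1]⁴`. -/
theorem condKLScore_equality_condition (p q : ℝ → ℝ → ℝ)
    (hpc : ContinuousOn (fun z : ℝ × ℝ => p z.1 z.2) (Icc (0:ℝ) 1 ×ˢ Icc (0:ℝ) 1))
    (hqc : ContinuousOn (fun z : ℝ × ℝ => q z.1 z.2) (Icc (0:ℝ) 1 ×ˢ Icc (0:ℝ) 1))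
    (hppos : ∀ x ∈ Icc (0:ℝ) 1, ∀ y ∈ Icc (0:ℝ) 1, 0 < p x y)
    (hqpos : ∀ x ∈ Icc (0:ℝ) 1, ∀ y ∈ Icc (0:ℝ) 1, 0 < q x y)
    (hp1 : ∫ z in Icc (0:ℝ) 1 ×ˢ Icc (0:ℝ) 1, p z.1 z.2 = 1)
    (hq1 : ∫ z in Icc (0:ℝ) 1 ×ˢ Icc (0:ℝ) 1, q z.1 z.2 = 1)
    (hfin_pq : IntegrableOn (cklIntegrand p q) unitBox4)
    (hfin_pp : IntegrableOn (cklIntegrand p p) unitBox4)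
    (heq : expCondKLScore p q = expCondKLScore p p) :
    ∀ x1 ∈ Icc (0:ℝ) 1, ∀ y1 ∈ Icc (0:ℝ) 1, ∀ x2 ∈ Icc (0:ℝ) 1, ∀ y2 ∈ Icc (0:ℝ) 1,
      q x1 y1 * q x2 y2 / (q x1 y1 * q x2 y2 + q x1 y2 * q x2 y1)
        = p x1 y1 * p x2 y2 / (p x1 y1 * p x2 y2 + p x1 y2 * p x2 y1) ∧
      q x1 y1 * q x2 y2 / (q x1 y2 * q x2 y1)
        = p x1 y1 * p x2 y2 / (p x1 y2 * p x2 y1) := by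
  have hemb : MeasurableEmbedding (⇑swapYE) := swapYE.measurableEmbedding
  -- integrability of the composed integrands
  have hint_pqσ : IntegrableOn (cklIntegrand p q ∘ ⇑swapYE) unitBox4 := by
    have := (mp_swapY.integrableOn_comp_preimage hemb (f := cklIntegrand p q)
      (s := unitBox4)).2 hfin_pq
    rwa [swapY_preimage_box] at this
  have hint_ppσ : IntegrableOn (cklIntegrand p p ∘ ⇑swapYE) unitBox4 := by
    have := (mp_swapY.integrableOn_comp_preimage hemb (f := cklIntegrand p p)
      (s := unitBox4)).2 hfin_pp
    rwa [swapY_preimage_box] at this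
  -- integrals of the composed integrands
  have hI_pqσ : ∫ w in unitBox4, cklIntegrand p q (swapYE w) = expCondKLScore p q := by
    have := mp_swapY.setIntegral_preimage_emb hemb (cklIntegrand p q) unitBox4
    rwa [swapY_preimage_box] at this
  have hI_ppσ : ∫ w in unitBox4, cklIntegrand p p (swapYE w) = expCondKLScore p p := by
    have := mp_swapY.setIntegral_preimage_emb hemb (cklIntegrand p p) unitBox4
    rwa [swapY_preimage_box] at this
  -- the symmetrized difference
  set g : ℝ × ℝ × ℝ × ℝ → ℝ := fun w =>
    cklIntegrand p q w + cklIntegrand p q (swapYE w)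
      - cklIntegrand p p w - cklIntegrand p p (swapYE w) with hgdef
  have hg_int : IntegrableOn g unitBox4 :=
    ((hfin_pq.add hint_pqσ).sub hfin_pp).sub hint_ppσ
  have i1 : IntegrableOn (fun w => cklIntegrand p q (swapYE w)) unitBox4 := hint_pqσ
  have i2 : IntegrableOn (fun w => cklIntegrand p p (swapYE w)) unitBox4 := hint_ppσ
  have hg_zero : ∫ w in unitBox4, g w = 0 := by
    have e1 : ∫ w in unitBox4, g w
        = ((∫ w in unitBox4, (cklIntegrand p q w + cklIntegrand p q (swapYE w)))
          - ∫ w in unitBox4, cklIntegrand p p w)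
          - ∫ w in unitBox4, cklIntegrand p p (swapYE w) := by
      have j1 : Integrable
          (fun w => cklIntegrand p q w + cklIntegrand p q (swapYE w) - cklIntegrand p p w)
          (volume.restrict unitBox4) := (hfin_pq.add i1).sub hfin_pp
      have j2 : Integrable
          (fun w => cklIntegrand p q w + cklIntegrand p q (swapYE w))
          (volume.restrict unitBox4) := hfin_pq.add i1
      simp only [hgdef]
      rw [integral_sub j1 i2, integral_sub j2 hfin_pp]
    rw [e1, integral_add hfin_pq i1, hI_pqσ, hI_ppσ]
    show expCondKLScore p q + expCondKLScore p q - expCondKLScore p p - expCondKLScore p p = 0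
    rw [heq]; ring
  have hg_eq : ∀ w : ℝ × ℝ × ℝ × ℝ, g w =
      Gexpr (p w.1 w.2.1 * p w.2.2.1 w.2.2.2) (p w.1 w.2.2.2 * p w.2.2.1 w.2.1)
        (q w.1 w.2.1 * q w.2.2.1 w.2.2.2) (q w.1 w.2.2.2 * q w.2.2.1 w.2.1) :=
    fun w => rfl
  have hposA : ∀ w ∈ unitBox4, 0 < p w.1 w.2.1 * p w.2.2.1 w.2.2.2 := fun w hw =>
    mul_pos (hppos _ hw.1 _ hw.2.1) (hppos _ hw.2.2.1 _ hw.2.2.2)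
  have hposA' : ∀ w ∈ unitBox4, 0 < p w.1 w.2.2.2 * p w.2.2.1 w.2.1 := fun w hw =>
    mul_pos (hppos _ hw.1 _ hw.2.2.2) (hppos _ hw.2.2.1 _ hw.2.1)
  have hposB : ∀ w ∈ unitBox4, 0 < q w.1 w.2.1 * q w.2.2.1 w.2.2.2 := fun w hw =>
    mul_pos (hqpos _ hw.1 _ hw.2.1) (hqpos _ hw.2.2.1 _ hw.2.2.2)
  have hposB' : ∀ w ∈ unitBox4, 0 < q w.1 w.2.2.2 * q w.2.2.1 w.2.1 := fun w hw =>
    mul_pos (hqpos _ hw.1 _ hw.2.2.2) (hqpos _ hw.2.2.1 _ hw.2.1)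
  have hg_nonneg : ∀ w ∈ unitBox4, 0 ≤ g w := fun w hw => by
    rw [hg_eq w]
    exact Gexpr_nonneg _ _ _ _ (hposA w hw) (hposA' w hw) (hposB w hw) (hposB' w hw)
  have hg_cont : ContinuousOn g unitBox4 := by
    have hσc : Continuous (⇑swapYE) := by
      have : Continuous (fun w : ℝ×ℝ×ℝ×ℝ => ((w.1, w.2.2.2, w.2.2.1, w.2.1) : ℝ×ℝ×ℝ×ℝ)) := by
        fun_prop
      convert this using 1
      exact funext fun w => rfl
    have hmt : MapsTo (⇑swapYE) unitBox4 unitBox4 := fun w hw => swapY_mem_box.2 hw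
    have c_pq := cklIntegrand_continuousOn p q hpc hqc hqpos
    have c_pp := cklIntegrand_continuousOn p p hpc hpc hppos
    have c_pqσ : ContinuousOn (fun w => cklIntegrand p q (swapYE w)) unitBox4 :=
      c_pq.comp hσc.continuousOn hmt
    have c_ppσ : ContinuousOn (fun w => cklIntegrand p p (swapYE w)) unitBox4 :=
      c_pp.comp hσc.continuousOn hmt
    exact ((c_pq.add c_pqσ).sub c_pp).sub c_ppσ
  have hg_vanish := zero_of_nonneg_cont g hg_cont hg_nonneg hg_int hg_zero
  intro x1 hx1 y1 hy1 x2 hx2 y2 hy2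
  set w : ℝ × ℝ × ℝ × ℝ := (x1, y1, x2, y2) with hw
  have hwbox : w ∈ unitBox4 := ⟨hx1, hy1, hx2, hy2⟩
  have h0 : Gexpr (p x1 y1 * p x2 y2) (p x1 y2 * p x2 y1)
      (q x1 y1 * q x2 y2) (q x1 y2 * q x2 y1) = 0 := by
    have := hg_vanish w hwbox
    rwa [hg_eq w] at this
  have hA := hposA w hwbox
  have hA' := hposA' w hwbox
  have hB := hposB w hwbox
  have hB' := hposB' w hwbox
  simp only [hw] at hA hA' hB hB'
  have hmain := Gexpr_eq_zero _ _ _ _ hA hA' hB hB' h0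
  refine ⟨hmain, ?_⟩
  have hcross : q x1 y1 * q x2 y2 * (p x1 y1 * p x2 y2 + p x1 y2 * p x2 y1)
      = p x1 y1 * p x2 y2 * (q x1 y1 * q x2 y2 + q x1 y2 * q x2 y1) := by
    have h := (div_eq_div_iff (by positivity) (by positivity)).1 hmain
    linarith
  rw [div_eq_div_iff hB'.ne' hA'.ne']
  nlinarith [hcross]
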